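/- Let α ∈ ℝ, let y : ℝ → ℝ, let t₀ ≠ 0, and set x₀ = t₀²/2, Y = y(x₀). Suppose y has derivative (2α·x₀³ + x₀² + x₀/2)·Y³ − (6α·x₀² + 2x₀ + 3/2)·Y² + (6α·x₀ + 1)·Y − 2α at x₀ — that is, y solves the first-kind AIL representative with k₃ = 2α, k₂ = −1, k₁ = 1/2, k₀ = 0. Define u(t) = t³·y(t²/2)/2 − t. Then u has derivative (α·t₀ + 1/t₀ + 1/t₀³)·u(t₀)³ + u(t₀)² at t₀. Hence Abel's parameterized Class A equation y' = (αx + 1/x + 1/x³)y³ + y² is a member of the AIL class. -/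

import Mathlib

/-- Abel's parameterized Class A equation `y' = (αx + 1/x + 1/x³)y³ + y²` is a member
of the AIL class: it is obtained from the first-kind AIL representative with
`k₃ = 2α, k₂ = −1, k₁ = 1/2, k₀ = 0` by the change of variables
`{x = t²/2, y = 2(u + t)/t³}`, i.e. `u = t³·y(t²/2)/2 − t`. -/
theorem classA_member_of_AIL
    (α : ℝ) (y : ℝ → ℝ) (t₀ : ℝ) (ht₀ : t₀ ≠ 0)
    (x₀ Y : ℝ) (hx₀ : x₀ = t₀ ^ 2 / 2) (hY : Y = y x₀)
    (hy : HasDerivAt y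
      ((2 * α * x₀ ^ 3 + x₀ ^ 2 + x₀ / 2) * Y ^ 3 -
        (6 * α * x₀ ^ 2 + 2 * x₀ + 3 / 2) * Y ^ 2 +
        (6 * α * x₀ + 1) * Y - 2 * α) x₀)
    (u : ℝ → ℝ) (hu : u = fun t => t ^ 3 * y (t ^ 2 / 2) / 2 - t) :
    HasDerivAt u
      ((α * t₀ + 1 / t₀ + 1 / t₀ ^ 3) * (u t₀) ^ 3 + (u t₀) ^ 2) t₀ := by
  set D := (2 * α * x₀ ^ 3 + x₀ ^ 2 + x₀ / 2) * Y ^ 3 -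
      (6 * α * x₀ ^ 2 + 2 * x₀ + 3 / 2) * Y ^ 2 +
      (6 * α * x₀ + 1) * Y - 2 * α with hD
  have hinner : HasDerivAt (fun t : ℝ => t ^ 2 / 2) t₀ t₀ := by
    have := ((hasDerivAt_pow 2 t₀).div_const 2)
    simpa using this
  have hcomp : HasDerivAt (fun t => y (t ^ 2 / 2)) (D * t₀) t₀ := by
    have := (hx₀ ▸ hy).comp t₀ hinner
    exact (by simpa using this : HasDerivAt (y ∘ fun t => t ^ 2 / 2) (D * t₀) t₀)
  have hcube : HasDerivAt (fun t : ℝ => t ^ 3) (3 * t₀ ^ 2) t₀ := by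
    simpa using hasDerivAt_pow 3 t₀
  have h1 : HasDerivAt (fun t => t ^ 3 * y (t ^ 2 / 2) / 2 - t)
      ((3 * t₀ ^ 2 * y (t₀ ^ 2 / 2) + t₀ ^ 3 * (D * t₀)) / 2 - 1) t₀ := by
    exact ((hcube.mul hcomp).div_const 2).sub (hasDerivAt_id t₀)
  rw [hu]
  convert h1 using 1
  have hyx : y (t₀ ^ 2 / 2) = Y := by rw [hY, hx₀]
  have hut : (fun t => t ^ 3 * y (t ^ 2 / 2) / 2 - t) t₀ = t₀ ^ 3 * Y / 2 - t₀ := by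
    simp [hyx]
  rw [hut, hyx, hD, hx₀]
  field_simp
  ring
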